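/- Let D ∈ ℂ[X] with deg D = 2n for some n ≥ 1, let (p, q) be a nontrivial solution of the Pell equation for D, and set U := p′/q ∈ ℂ[X]. Let α ∈ ℂ be a root of D, let k₁ ≥ 1 be the multiplicity of α as a root of D, and let k₂ be the multiplicity of α as a root of U. Then k₂ ≥ k₁ − 1, and moreover (X − α)²·D is Pellian if and only if k₂ ≥ k₁. -/
import Mathlib


open Polynomial

/-- `D` is Pellian: the polynomial Pell equation `p² - q²·D = 1` has a
nontrivial solution. -/
def IsPellian (D : Polynomial ℂ) : Prop :=
  ∃ p q : Polynomial ℂ, p ^ 2 - q ^ 2 * D = 1 ∧ q ≠ 0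

namespace PellAux

/-- The sequence of Pell solutions generated by `(p₀, q₀)`. -/
noncomputable def PQ (D p₀ q₀ : Polynomial ℂ) : ℕ → Polynomial ℂ × Polynomial ℂ
  | 0 => (1, 0)
  | k+1 => ((PQ D p₀ q₀ k).1 * p₀ + (PQ D p₀ q₀ k).2 * q₀ * D,
            (PQ D p₀ q₀ k).1 * q₀ + (PQ D p₀ q₀ k).2 * p₀)

variable {D p₀ q₀ : Polynomial ℂ}

lemma PQ_sol (h₀ : p₀ ^ 2 - q₀ ^ 2 * D = 1) :
    ∀ k, (PQ D p₀ q₀ k).1 ^ 2 - (PQ D p₀ q₀ k).2 ^ 2 * D = 1 := by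
  intro k
  induction k with
  | zero => simp [PQ]
  | succ k ih =>
    show ((PQ D p₀ q₀ k).1 * p₀ + (PQ D p₀ q₀ k).2 * q₀ * D) ^ 2
        - ((PQ D p₀ q₀ k).1 * q₀ + (PQ D p₀ q₀ k).2 * p₀) ^ 2 * D = 1
    linear_combination (p₀ ^ 2 - q₀ ^ 2 * D) * ih + h₀

lemma Qdown (h₀ : p₀ ^ 2 - q₀ ^ 2 * D = 1) (k : ℕ) :
    (PQ D p₀ q₀ (k+1)).2 * p₀ - (PQ D p₀ q₀ (k+1)).1 * q₀ = (PQ D p₀ q₀ k).2 := by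
  show ((PQ D p₀ q₀ k).1 * q₀ + (PQ D p₀ q₀ k).2 * p₀) * p₀
      - ((PQ D p₀ q₀ k).1 * p₀ + (PQ D p₀ q₀ k).2 * q₀ * D) * q₀ = (PQ D p₀ q₀ k).2
  linear_combination (PQ D p₀ q₀ k).2 * h₀

lemma PQ_eval {α : ℂ} (hα : D.eval α = 0) (k : ℕ) :
    (PQ D p₀ q₀ k).1.eval α = (p₀.eval α) ^ k ∧
    (p₀.eval α) * ((PQ D p₀ q₀ k).2.eval α)
      = (k : ℂ) * (p₀.eval α) ^ k * (q₀.eval α) := by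
  induction k with
  | zero => simp [PQ]
  | succ k ih =>
    obtain ⟨ih1, ih2⟩ := ih
    constructor
    · show ((PQ D p₀ q₀ k).1 * p₀ + (PQ D p₀ q₀ k).2 * q₀ * D).eval α = _
      simp only [eval_add, eval_mul, hα, mul_zero, add_zero, ih1]
      ring
    · show (p₀.eval α) * (((PQ D p₀ q₀ k).1 * q₀ + (PQ D p₀ q₀ k).2 * p₀).eval α) = _
      simp only [eval_add, eval_mul]
      push_cast
      linear_combination (p₀.eval α * q₀.eval α) * ih1 + (p₀.eval α) * ih2

lemma sol_deg {n : ℕ} (hn : 1 ≤ n) {D : Polynomial ℂ} (hD : D.natDegree = 2 * n)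
    {p q : Polynomial ℂ} (hpq : p ^ 2 - q ^ 2 * D = 1) (hq : q ≠ 0) :
    p ≠ 0 ∧ p.natDegree = q.natDegree + n ∧
      p.leadingCoeff ^ 2 = q.leadingCoeff ^ 2 * D.leadingCoeff := by
  have hD0 : D ≠ 0 := by
    intro h; rw [h, natDegree_zero] at hD; omega
  have hq2 : q ^ 2 ≠ 0 := pow_ne_zero _ hq
  have hf : q ^ 2 * D ≠ 0 := mul_ne_zero hq2 hD0
  have hfd : (q ^ 2 * D).natDegree = 2 * q.natDegree + 2 * n := by
    rw [natDegree_mul hq2 hD0, natDegree_pow, hD]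
  have hp2 : p ^ 2 = 1 + q ^ 2 * D := by linear_combination hpq
  have hdpos : 0 < (q ^ 2 * D).natDegree := by omega
  have hlt : (1 : Polynomial ℂ).degree < (q ^ 2 * D).degree := by
    rw [degree_one]; exact natDegree_pos_iff_degree_pos.mp hdpos
  have hdeg : (p ^ 2).natDegree = 2 * q.natDegree + 2 * n := by
    rw [hp2, natDegree_add_eq_right_of_degree_lt hlt, hfd]
  have hp0 : p ≠ 0 := by
    intro h
    rw [h] at hdeg
    norm_num at hdeg
    omega
  have hpd : p.natDegree = q.natDegree + n := by
    rw [natDegree_pow] at hdeg; omega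
  refine ⟨hp0, hpd, ?_⟩
  calc p.leadingCoeff ^ 2 = (p ^ 2).leadingCoeff := (leadingCoeff_pow p 2).symm
    _ = (1 + q ^ 2 * D).leadingCoeff := by rw [hp2]
    _ = (q ^ 2 * D).leadingCoeff := leadingCoeff_add_of_degree_lt hlt
    _ = q.leadingCoeff ^ 2 * D.leadingCoeff := by rw [leadingCoeff_mul, leadingCoeff_pow]

lemma descent {n : ℕ} (hn : 1 ≤ n) {D : Polynomial ℂ} (hD : D.natDegree = 2 * n)
    {p₀ q₀ : Polynomial ℂ} (h₀ : p₀ ^ 2 - q₀ ^ 2 * D = 1) (hq₀ : q₀ ≠ 0)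
    {p q : Polynomial ℂ} (hpq : p ^ 2 - q ^ 2 * D = 1) (hq : q ≠ 0)
    (hqq₀ : q₀.natDegree ≤ q.natDegree)
    (hl : q.leadingCoeff * p₀.leadingCoeff = p.leadingCoeff * q₀.leadingCoeff) :
    ∃ s r : Polynomial ℂ, s ^ 2 - r ^ 2 * D = 1 ∧ q = s * q₀ + r * p₀ ∧
      (r = 0 → q = q₀ ∨ q = -q₀) ∧ (r ≠ 0 → r.natDegree < q.natDegree) := by
  obtain ⟨hp0, hpd, hpl⟩ := sol_deg hn hD hpq hq
  obtain ⟨hp₀0, hp₀d, hp₀l⟩ := sol_deg hn hD h₀ hq₀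
  refine ⟨p * p₀ - q * q₀ * D, q * p₀ - p * q₀, ?_, ?_, ?_, ?_⟩
  · linear_combination (p₀ ^ 2 - q₀ ^ 2 * D) * hpq + h₀
  · linear_combination (-q) * h₀
  · intro hr0
    have h2 : (q - q₀) * (q + q₀) = 0 := by
      linear_combination (q * p₀ + p * q₀) * hr0 + q₀ ^ 2 * hpq - q ^ 2 * h₀
    rcases mul_eq_zero.mp h2 with h | h
    · exact Or.inl (sub_eq_zero.mp h)
    · exact Or.inr (eq_neg_of_add_eq_zero_left h)
  · intro hr
    set r := q * p₀ - p * q₀ with hrdef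
    set rt := q * p₀ + p * q₀ with hrtdef
    set d₀ := q.natDegree + q₀.natDegree + n with hd₀
    have hqp₀ : (q * p₀).natDegree = d₀ := by
      rw [natDegree_mul hq hp₀0, hp₀d]; ring
    have hpq₀ : (p * q₀).natDegree = d₀ := by
      rw [natDegree_mul hp0 hq₀, hpd]; ring
    have hcoeff : rt.coeff d₀ = 2 * (q.leadingCoeff * p₀.leadingCoeff) := by
      rw [hrtdef, coeff_add, ← hqp₀, coeff_natDegree, hqp₀, ← hpq₀, coeff_natDegree,
        leadingCoeff_mul, leadingCoeff_mul, ← hl]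
      ring
    have hlc0 : q.leadingCoeff * p₀.leadingCoeff ≠ 0 :=
      mul_ne_zero (leadingCoeff_ne_zero.mpr hq) (leadingCoeff_ne_zero.mpr hp₀0)
    have hcoeff0 : rt.coeff d₀ ≠ 0 := by
      rw [hcoeff]; exact mul_ne_zero two_ne_zero hlc0
    have hrt0 : rt ≠ 0 := fun h => hcoeff0 (by rw [h, coeff_zero])
    have hrtd : rt.natDegree = d₀ := by
      refine le_antisymm ?_ (le_natDegree_of_ne_zero hcoeff0)
      refine le_trans (natDegree_add_le _ _) ?_
      rw [hqp₀, hpq₀]; omega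
    have hprod : r * rt = q ^ 2 - q₀ ^ 2 := by
      linear_combination q ^ 2 * h₀ - q₀ ^ 2 * hpq
    have hne : q ^ 2 - q₀ ^ 2 ≠ 0 := by
      rw [← hprod]; exact mul_ne_zero hr hrt0
    have hdle : (q ^ 2 - q₀ ^ 2).natDegree ≤ 2 * q.natDegree := by
      refine le_trans (natDegree_sub_le _ _) ?_
      rw [natDegree_pow, natDegree_pow]; omega
    have : r.natDegree + d₀ ≤ 2 * q.natDegree := by
      rw [← hrtd, ← natDegree_mul hr hrt0, hprod]; exact hdle
    omega

lemma structure_thm {n : ℕ} (hn : 1 ≤ n) {D : Polynomial ℂ} (hD : D.natDegree = 2 * n)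
    {p₀ q₀ : Polynomial ℂ} (h₀ : p₀ ^ 2 - q₀ ^ 2 * D = 1) (hq₀ : q₀ ≠ 0)
    (hmin : ∀ p q : Polynomial ℂ, p ^ 2 - q ^ 2 * D = 1 → q ≠ 0 →
      q₀.natDegree ≤ q.natDegree) :
    ∀ (N : ℕ) (p q : Polynomial ℂ), p ^ 2 - q ^ 2 * D = 1 → q ≠ 0 →
      q.natDegree < N →
      ∃ k, 1 ≤ k ∧ (q = (PQ D p₀ q₀ k).2 ∨ q = -(PQ D p₀ q₀ k).2) := by
  intro N
  induction N with
  | zero => intro p q _ _ h; omega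
  | succ N IH =>
    intro p q hpq hq hdeg
    obtain ⟨hp0, hpd, hpl⟩ := sol_deg hn hD hpq hq
    obtain ⟨hp₀0, hp₀d, hp₀l⟩ := sol_deg hn hD h₀ hq₀
    have hsq : (q.leadingCoeff * p₀.leadingCoeff - p.leadingCoeff * q₀.leadingCoeff)
        * (q.leadingCoeff * p₀.leadingCoeff + p.leadingCoeff * q₀.leadingCoeff) = 0 := by
      linear_combination q.leadingCoeff ^ 2 * hp₀l - q₀.leadingCoeff ^ 2 * hpl
    have hdesc : ∃ s r : Polynomial ℂ, s ^ 2 - r ^ 2 * D = 1 ∧ q = s * q₀ + r * p₀ ∧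
        (r = 0 → q = q₀ ∨ q = -q₀) ∧ (r ≠ 0 → r.natDegree < q.natDegree) := by
      rcases mul_eq_zero.mp hsq with h | h
      · exact descent hn hD h₀ hq₀ hpq hq (hmin p q hpq hq) (sub_eq_zero.mp h)
      · have hpq' : (-p) ^ 2 - q ^ 2 * D = 1 := by linear_combination hpq
        refine descent hn hD h₀ hq₀ hpq' hq (hmin p q hpq hq) ?_
        rw [leadingCoeff_neg]
        linear_combination h
    obtain ⟨s, r, hsr, hrec, hr0, hrdeg⟩ := hdesc
    by_cases hr : r = 0
    · rcases hr0 hr with h | h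
      · exact ⟨1, le_refl 1, Or.inl (by simp [PQ, h])⟩
      · exact ⟨1, le_refl 1, Or.inr (by simp [PQ, h])⟩
    · obtain ⟨k, hk1, hkr⟩ := IH s r hsr hr (by have := hrdeg hr; omega)
      obtain ⟨j, rfl⟩ : ∃ j, k = j + 1 := ⟨k - 1, by omega⟩
      have hP := PQ_sol h₀ (j + 1)
      have hr2 : r ^ 2 = (PQ D p₀ q₀ (j+1)).2 ^ 2 := by
        rcases hkr with h | h <;> rw [h] <;> ring
      have hsP : (s - (PQ D p₀ q₀ (j+1)).1) * (s + (PQ D p₀ q₀ (j+1)).1) = 0 := by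
        linear_combination hsr - hP + D * hr2
      have hQsucc : (PQ D p₀ q₀ (j+2)).2
          = (PQ D p₀ q₀ (j+1)).1 * q₀ + (PQ D p₀ q₀ (j+1)).2 * p₀ := rfl
      have hQd := Qdown h₀ j
      rcases mul_eq_zero.mp hsP with hs | hs <;>
        rcases hkr with hrk | hrk
      · refine ⟨j + 2, by omega, Or.inl ?_⟩
        rw [hrec, sub_eq_zero.mp hs, hrk, hQsucc]
      · have hj : q = -(PQ D p₀ q₀ j).2 := by
          rw [hrec, sub_eq_zero.mp hs, hrk, ← hQd]; ring
        have hj0 : j ≠ 0 := by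
          intro h; rw [h] at hj; simp [PQ] at hj; exact hq hj
        exact ⟨j, by omega, Or.inr hj⟩
      · have hs' : s = -(PQ D p₀ q₀ (j+1)).1 := eq_neg_of_add_eq_zero_left hs
        have hj : q = (PQ D p₀ q₀ j).2 := by
          rw [hrec, hs', hrk, ← hQd]; ring
        have hj0 : j ≠ 0 := by
          intro h; rw [h] at hj; simp [PQ] at hj; exact hq hj
        exact ⟨j, by omega, Or.inl hj⟩
      · have hs' : s = -(PQ D p₀ q₀ (j+1)).1 := eq_neg_of_add_eq_zero_left hs
        refine ⟨j + 2, by omega, Or.inr ?_⟩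
        rw [hrec, hs', hrk, hQsucc]; ring

/-- For a fixed `D` with a root `α`, whether the `q`-component of a nontrivial
Pell solution vanishes at `α` does not depend on the solution. -/
lemma root_transfer {n : ℕ} (hn : 1 ≤ n) {D : Polynomial ℂ} (hD : D.natDegree = 2 * n)
    {α : ℂ} (hα : D.eval α = 0)
    {p q a c : Polynomial ℂ} (hpq : p ^ 2 - q ^ 2 * D = 1) (hq : q ≠ 0)
    (hac : a ^ 2 - c ^ 2 * D = 1) (hc : c ≠ 0) :
    (q.eval α = 0 ↔ c.eval α = 0) := by
  classical
  have hex : ∃ d : ℕ, ∃ p' q' : Polynomial ℂ,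
      p' ^ 2 - q' ^ 2 * D = 1 ∧ q' ≠ 0 ∧ q'.natDegree = d :=
    ⟨q.natDegree, p, q, hpq, hq, rfl⟩
  obtain ⟨p₀, q₀, h₀, hq₀, hd₀⟩ := Nat.find_spec hex
  have hmin : ∀ p' q' : Polynomial ℂ, p' ^ 2 - q' ^ 2 * D = 1 → q' ≠ 0 →
      q₀.natDegree ≤ q'.natDegree := by
    intro p' q' h' hq'
    rw [hd₀]
    exact Nat.find_min' hex ⟨p', q', h', hq', rfl⟩
  have he : p₀.eval α ^ 2 = 1 := by
    have := congrArg (eval α) h₀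
    simp only [eval_sub, eval_mul, eval_pow, eval_one, hα, mul_zero, sub_zero] at this
    exact this
  have he0 : p₀.eval α ≠ 0 := by
    intro h; rw [h] at he; norm_num at he
  have key : ∀ p' q' : Polynomial ℂ, p' ^ 2 - q' ^ 2 * D = 1 → q' ≠ 0 →
      (q'.eval α = 0 ↔ q₀.eval α = 0) := by
    intro p' q' h' hq'
    obtain ⟨k, hk1, hkq⟩ := structure_thm hn hD h₀ hq₀ hmin (q'.natDegree + 1)
      p' q' h' hq' (Nat.lt_succ_self _)
    obtain ⟨-, hev⟩ := PQ_eval (p₀ := p₀) (q₀ := q₀) hα k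
    have hqeval : q'.eval α = (PQ D p₀ q₀ k).2.eval α ∨
        q'.eval α = -((PQ D p₀ q₀ k).2.eval α) := by
      rcases hkq with h | h
      · exact Or.inl (by rw [h])
      · exact Or.inr (by rw [h, eval_neg])
    have hiff : q'.eval α = 0 ↔ (PQ D p₀ q₀ k).2.eval α = 0 := by
      rcases hqeval with h | h <;> rw [h] <;> simp
    rw [hiff]
    constructor
    · intro h
      rw [h, mul_zero] at hev
      have hk0 : (k : ℂ) ≠ 0 := Nat.cast_ne_zero.mpr (by omega)
      have := (mul_eq_zero.mp hev.symm)
      rcases this with h' | h'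
      · rcases mul_eq_zero.mp h' with h'' | h''
        · exact absurd h'' hk0
        · exact absurd h'' (pow_ne_zero _ he0)
      · exact h'
    · intro h
      rw [h, mul_zero] at hev
      rcases mul_eq_zero.mp hev with h' | h'
      · exact absurd h' he0
      · exact h'
  rw [key p q hpq hq, key a c hac hc]

/-- Multiplicity formula: `mult_α U + 1 = mult_α q + mult_α D`. -/
lemma multU {n : ℕ} (hn : 1 ≤ n) {D p q U : Polynomial ℂ} (hD : D.natDegree = 2 * n)
    (hpq : p ^ 2 - q ^ 2 * D = 1) (hq : q ≠ 0) (hU : derivative p = q * U)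
    {α : ℂ} (hα : D.IsRoot α) :
    U ≠ 0 ∧ rootMultiplicity α U + 1 = rootMultiplicity α q + rootMultiplicity α D := by
  have hD0 : D ≠ 0 := by intro h; rw [h, natDegree_zero] at hD; omega
  have hq2 : q ^ 2 ≠ 0 := pow_ne_zero _ hq
  have hG0 : q ^ 2 * D ≠ 0 := mul_ne_zero hq2 hD0
  have hG : q ^ 2 * D = p ^ 2 - 1 := by linear_combination -hpq
  have hGd : (q ^ 2 * D).natDegree = 2 * q.natDegree + 2 * n := by
    rw [natDegree_mul hq2 hD0, natDegree_pow, hD]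
  have hder : derivative (q ^ 2 * D) = C 2 * p * (q * U) := by
    rw [hG, derivative_sub, derivative_one, sub_zero, derivative_pow, hU]
    norm_num
  have hder0 : derivative (q ^ 2 * D) ≠ 0 := by
    intro h
    have := natDegree_eq_zero_of_derivative_eq_zero h
    omega
  have hU0 : U ≠ 0 := by
    intro h; rw [h, mul_zero, mul_zero] at hder; exact hder0 hder
  have hp0 : p ≠ 0 := by
    intro h
    rw [h, map_zero] at hU
    rw [hG, h] at hGd
    norm_num at hGd
    omega
  have heval : p.eval α ^ 2 - q.eval α ^ 2 * D.eval α = 1 := by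
    have := congrArg (eval α) hpq
    simpa using this
  have hpα : p.eval α ≠ 0 := by
    intro h
    rw [h, hα.eq_zero] at heval
    norm_num at heval
  have hroot : (q ^ 2 * D).IsRoot α := by
    simp [IsRoot, hα.eq_zero]
  have hmul1 : rootMultiplicity α (q ^ 2 * D)
      = 2 * rootMultiplicity α q + rootMultiplicity α D := by
    rw [rootMultiplicity_mul hG0, pow_two, rootMultiplicity_mul (mul_ne_zero hq hq)]
    ring
  have hderm := derivative_rootMultiplicity_of_root hroot
  have hC2 : (C 2 * p : Polynomial ℂ) ≠ 0 := mul_ne_zero (by norm_num) hp0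
  have hmul2 : rootMultiplicity α (C 2 * p * (q * U))
      = rootMultiplicity α q + rootMultiplicity α U := by
    rw [rootMultiplicity_mul (mul_ne_zero hC2 (mul_ne_zero hq hU0)),
      rootMultiplicity_mul (mul_ne_zero hq hU0),
      rootMultiplicity_eq_zero (by
        intro h
        rw [IsRoot, eval_mul, eval_C] at h
        rcases mul_eq_zero.mp h with h' | h'
        · exact two_ne_zero h'
        · exact hpα h')]
    ring
  have hpos : 0 < rootMultiplicity α D := (rootMultiplicity_pos hD0).mpr hα
  rw [hder, hmul2] at hderm
  rw [hmul1] at hderm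
  refine ⟨hU0, by omega⟩

end PellAux

/-- Let `deg D = 2n`, let `(p, q)` be a nontrivial Pell
solution for `D` and `U = p′/q`. If `α` is a root of `D` of multiplicity
`k₁ ≥ 1` and `k₂` is the multiplicity of `α` as a root of `U`, then
`k₂ ≥ k₁ - 1`, and `(X - α)²·D` is Pellian if and only if `k₂ ≥ k₁`. -/
theorem pell_root_multiplicity (n : ℕ) (hn : 1 ≤ n) (D p q U : Polynomial ℂ)
    (hD : D.natDegree = 2 * n)
    (hpq : p ^ 2 - q ^ 2 * D = 1) (hq : q ≠ 0)
    (hU : derivative p = q * U)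
    (α : ℂ) (hα : D.IsRoot α) (k₁ k₂ : ℕ)
    (hk₁ : k₁ = rootMultiplicity α D) (hk₂ : k₂ = rootMultiplicity α U) :
    k₁ - 1 ≤ k₂ ∧
    (IsPellian ((X - C α) ^ 2 * D) ↔ k₁ ≤ k₂) := by
  have hD0 : D ≠ 0 := by intro h; rw [h, natDegree_zero] at hD; omega
  obtain ⟨hU0, hmult⟩ := PellAux.multU hn hD hpq hq hU hα
  have hpos : 0 < rootMultiplicity α D := (rootMultiplicity_pos hD0).mpr hα
  rw [← hk₁, ← hk₂] at hmult
  refine ⟨by omega, ?_, ?_⟩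
  · -- Pellian → k₁ ≤ k₂
    rintro ⟨a, b, hab, hb⟩
    set c := (X - C α) * b with hcdef
    have hac : a ^ 2 - c ^ 2 * D = 1 := by
      rw [hcdef]; linear_combination hab
    have hc0 : c ≠ 0 := mul_ne_zero (X_sub_C_ne_zero α) hb
    have hcα : c.eval α = 0 := by simp [hcdef]
    have hqα : q.eval α = 0 :=
      (PellAux.root_transfer hn hD hα.eq_zero hpq hq hac hc0).mpr hcα
    have hm : 0 < rootMultiplicity α q := (rootMultiplicity_pos hq).mpr hqα
    omega
  · -- k₁ ≤ k₂ → Pellian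
    intro hk
    have hm : 0 < rootMultiplicity α q := by omega
    have hqα : q.IsRoot α := (rootMultiplicity_pos hq).mp hm
    obtain ⟨q₂, hq2⟩ := dvd_iff_isRoot.mpr hqα
    have hq20 : q₂ ≠ 0 := by
      intro h; rw [h, mul_zero] at hq2; exact hq hq2
    refine ⟨p, q₂, ?_, hq20⟩
    rw [hq2] at hpq
    linear_combination hpq
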